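/- arXiv:0711.4238 — 2 statements merged into one kernel-verified Lean document; each statement's English description precedes it below -/
import Mathlib

section
/- If G is a finitely generated group, N ⊴ G is a normal subgroup maximal with respect to having infinite index, and G has no proper subgroups of finite index, then the quotient Q = G/N is an infinite simple group. -/
/-- If `G` is a finitely generated group, `N ⊴ G` is maximal with respect to
having infinite index, and `G` has no proper subgroups of finite index, then
`G ⧸ N` is an infinite simple group. -/
theorem stmt_2 {G : Type*} [Group G] (hfg : Group.FG G)
    (N : Subgroup G) [hN : N.Normal]
    (hinf : N.index = 0)
    (hmax : ∀ M : Subgroup G, M.Normal → N < M → M.index ≠ 0)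
    (hnofin : ∀ H : Subgroup G, H.index ≠ 0 → H = ⊤) :
    Infinite (G ⧸ N) ∧ IsSimpleGroup (G ⧸ N) := by
  have hcard : Nat.card (G ⧸ N) = 0 := hinf
  have hInf : Infinite (G ⧸ N) := by
    rcases Nat.card_eq_zero.mp hcard with h | h
    · exact (h.false (1 : G ⧸ N)).elim
    · exact h
  refine ⟨hInf, ?_⟩
  haveI := hInf
  constructor
  intro H hHnorm
  set f := QuotientGroup.mk' N with hf
  have hsurj : Function.Surjective f := QuotientGroup.mk'_surjective N
  have hHeq : Subgroup.map f (Subgroup.comap f H) = H :=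
    Subgroup.map_comap_eq_self_of_surjective hsurj H
  have hNle : N ≤ Subgroup.comap f H := by
    intro x hx
    have : f x = 1 := by
      simpa [hf] using (QuotientGroup.eq_one_iff x).mpr hx
    rw [Subgroup.mem_comap, this]; exact one_mem H
  rcases eq_or_lt_of_le hNle with heq | hlt
  · left
    rw [← hHeq, ← heq]
    rw [le_bot_iff.symm]
    intro y hy
    rcases hy with ⟨x, hx, rfl⟩
    have : f x = 1 := (QuotientGroup.eq_one_iff x).mpr (heq ▸ hx : x ∈ N)
    simp [this]
  · right
    have hMnorm : (Subgroup.comap f H).Normal := hHnorm.comap f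
    have hMtop : Subgroup.comap f H = ⊤ := hnofin _ (hmax _ hMnorm hlt)
    rw [← hHeq, hMtop]
    exact Subgroup.map_top_of_surjective f hsurj
end

section
/- Let γ be a loop in the 1-skeleton of a simplicial complex K having minimal combinatorial length L among all loops in the 1-skeleton of K in its free homotopy class. Then any lift γ̃ of γ to the universal cover K̃ of K is a local geodesic on scale L: for any two vertices of γ̃ at distance at most L along γ̃, their distance along γ̃ equals their distance in the 1-skeleton of K̃. -/
private lemma walk_along {V : Type*} {Γ : SimpleGraph V} {γ : ℤ → V}
    (hadj : ∀ i : ℤ, Γ.Adj (γ i) (γ (i + 1))) :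
    ∀ (n : ℕ) (a : ℤ), ∃ w : Γ.Walk (γ a) (γ (a + n)), w.length = n := by
  intro n
  induction n with
  | zero => intro a; exact ⟨SimpleGraph.Walk.nil.copy rfl (by norm_num), by simp⟩
  | succ n ih =>
    intro a
    obtain ⟨w, hw⟩ := ih (a + 1)
    refine ⟨(SimpleGraph.Walk.cons (hadj a) w).copy rfl (by push_cast; ring_nf), ?_⟩
    simp [hw]

/-- Let `γ` be a bi-infinite path in the 1-skeleton `Γ` of the universal cover
`K̃` of a simplicial complex `K`, invariant under a deck transformation `t`
acting on it as a translation by `L`.  Minimality of the projected loop in its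
free homotopy class means precisely that every walk in `Γ` from a vertex `v` to
`t v` has length at least `L`.  Then `γ` minimizes distance in the 1-skeleton
between any two of its vertices lying at distance at most `L` along `γ`. -/
theorem stmt_13 {V : Type*} (Γ : SimpleGraph V) (L : ℕ) (hL : 0 < L)
    (t : Γ ≃g Γ) (γ : ℤ → V)
    (hadj : ∀ i : ℤ, Γ.Adj (γ i) (γ (i + 1)))
    (ht : ∀ i : ℤ, t (γ i) = γ (i + L))
    (hmin : ∀ (v : V) (w : Γ.Walk v (t v)), L ≤ w.length) :
    ∀ i j : ℤ, (i - j).natAbs ≤ L → Γ.dist (γ i) (γ j) = (i - j).natAbs := by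
  -- it suffices to prove it for j ≤ i
  suffices H : ∀ i j : ℤ, j ≤ i → (i - j).natAbs ≤ L → Γ.dist (γ i) (γ j) = (i - j).natAbs by
    intro i j hij
    rcases le_total j i with h | h
    · exact H i j h hij
    · rw [Γ.dist_comm, ← Int.natAbs_neg, neg_sub]
      exact H j i h (by rwa [← Int.natAbs_neg, neg_sub] at hij)
  intro i j hji hL'
  set n : ℕ := (i - j).natAbs with hn
  have hjn : j + (n : ℤ) = i := by
    have : (n : ℤ) = i - j := Int.natAbs_of_nonneg (by omega)
    omega
  obtain ⟨w0, hw⟩ := walk_along hadj n j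
  let w : Γ.Walk (γ j) (γ i) := w0.copy rfl (congrArg γ hjn)
  have hw' : w.length = n := by simpa [w] using hw
  -- upper bound
  have hub : Γ.dist (γ i) (γ j) ≤ n := by
    rw [Γ.dist_comm]; exact hw' ▸ SimpleGraph.dist_le w
  refine le_antisymm hub ?_
  by_contra hlt
  push_neg at hlt
  -- a geodesic walk p from γ j to γ i, of length d < n
  have hreach : Γ.Reachable (γ j) (γ i) := ⟨w⟩
  obtain ⟨p, hp⟩ := hreach.exists_walk_length_eq_dist
  -- walk from γ i to γ (j + L) along γ, of length L - n
  obtain ⟨q0, hq⟩ := walk_along hadj (L - n) i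
  have hiLn : i + ((L - n : ℕ) : ℤ) = j + L := by
    have : (n : ℤ) = i - j := Int.natAbs_of_nonneg (by omega)
    push_cast [Nat.cast_sub hL']
    omega
  let q : Γ.Walk (γ i) (γ (j + L)) := q0.copy rfl (congrArg γ hiLn)
  have hq2 : q.length = L - n := by simpa [q] using hq
  have hq' : γ (j + L) = t (γ j) := (ht j).symm
  have := hmin (γ j) ((p.append q).copy rfl hq')
  rw [SimpleGraph.Walk.length_copy, SimpleGraph.Walk.length_append, hp, hq2] at this
  rw [Γ.dist_comm] at hlt
  omega
end
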